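/- If a sequence of vectors x^k ∈ ℝ^n converges to x* ∈ ℝ^n, then lim inf_{k→∞} S(x^k) ≥ S(x*), where S(v) counts the number of sign changes in v after deleting zero entries. -/

import Mathlib

/-- The variation `S(v)`: the number of sign changes of a finite real sequence,
after deleting all zero entries. -/
noncomputable def variation (v : List ℝ) : ℕ :=
  let w := v.filter (fun x => x ≠ 0)
  (w.zip w.tail).countP (fun q => q.1 * q.2 < 0)

/-- Number of adjacent sign changes. -/
noncomputable def sc (w : List ℝ) : ℕ :=
  (w.zip w.tail).countP (fun q => q.1 * q.2 < 0)

lemma sc_nil : sc [] = 0 := rfl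
lemma sc_singleton (a : ℝ) : sc [a] = 0 := rfl

lemma sc_cons_cons (a b : ℝ) (t : List ℝ) :
    sc (a :: b :: t) = (if a * b < 0 then 1 else 0) + sc (b :: t) := by
  simp only [sc, List.tail_cons, List.zip_cons_cons, List.countP_cons]
  by_cases h : a * b < 0 <;> simp [h] <;> omega

lemma sign_trans {a b c : ℝ} (h1 : a * b < 0) (h2 : 0 < c * b) : a * c < 0 := by
  have hb : b ≠ 0 := by rintro rfl; simp at h2
  have h3 : (a * b) * (c * b) < 0 := mul_neg_of_neg_of_pos h1 h2
  by_contra h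
  push_neg at h
  nlinarith [mul_nonneg h (mul_self_nonneg b)]

/-- head penalty -/
noncomputable def hd2 (u w : List ℝ) : ℕ :=
  match u, w with
  | a :: _, b :: _ => if a * b < 0 then 1 else 0
  | _, _ => 0

lemma sc_sublist_aux {u w : List ℝ} (h : u.Sublist w) (hw : ∀ a ∈ w, a ≠ 0) :
    sc u + hd2 u w ≤ sc w := by
  induction h with
  | slnil => simp [sc, hd2]
  | @cons u w a h ih =>
    have hw' : ∀ b ∈ w, b ≠ 0 := fun b hb => hw b (List.mem_cons_of_mem _ hb)
    have ha : a ≠ 0 := hw a (List.mem_cons_self)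
    have ih' := ih hw'
    match u, w with
    | [], w => simp [hd2, sc_nil]
    | c :: u', [] => exact absurd h (by simp)
    | c :: u', b :: w' =>
      have hb : b ≠ 0 := hw' b (List.mem_cons_self)
      have hc : c ≠ 0 := hw' c (h.subset (List.mem_cons_self))
      rw [sc_cons_cons]
      simp only [hd2] at ih' ⊢
      by_cases hca : c * a < 0
      · simp only [hca, if_true]
        by_cases hcb : c * b < 0
        · simp only [hcb, if_true] at ih'
          omega
        · have hcb' : 0 < c * b := lt_of_le_of_ne (not_lt.mp hcb) (Ne.symm (mul_ne_zero hc hb))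
          have hab : a * b < 0 := by
            have : a * c < 0 := by linarith [mul_comm c a]
            have := sign_trans this (by linarith [mul_comm c b] : 0 < b * c)
            linarith [mul_comm a b]
          simp only [hcb, if_false, add_zero] at ih'
          simp only [hab, if_true]
          omega
      · simp only [hca, if_false, add_zero]
        have : sc (b :: w') ≤ (if a * b < 0 then 1 else 0) + sc (b :: w') := by omega
        omega
  | @cons_cons u w a h ih =>
    have ha : a ≠ 0 := hw a (List.mem_cons_self)
    have hw' : ∀ b ∈ w, b ≠ 0 := fun b hb => hw b (List.mem_cons_of_mem _ hb)
    have ih' := ih hw'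
    have haa : ¬ (a * a < 0) := by nlinarith [mul_self_nonneg a]
    simp only [hd2, haa, if_false, add_zero]
    match u, w with
    | [], w => simp [sc_singleton, sc_nil]
    | c :: u', [] => exact absurd h (by simp)
    | c :: u', b :: w' =>
      have hb : b ≠ 0 := hw' b (List.mem_cons_self)
      have hc : c ≠ 0 := hw' c (h.subset (List.mem_cons_self))
      rw [sc_cons_cons, sc_cons_cons]
      simp only [hd2] at ih'
      by_cases hcb : c * b < 0
      · simp only [hcb, if_true] at ih'
        by_cases hac : a * c < 0 <;> by_cases hab : a * b < 0 <;>
          simp only [hac, hab, if_true, if_false] <;> omega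
      · have hcb' : 0 < c * b := lt_of_le_of_ne (not_lt.mp hcb) (Ne.symm (mul_ne_zero hc hb))
        have hiff : (a * c < 0) ↔ (a * b < 0) := by
          constructor
          · intro hh
            have := sign_trans hh (by linarith [mul_comm c b] : 0 < b * c)
            linarith
          · intro hh
            exact sign_trans hh hcb'
        simp only [hcb, if_false, add_zero] at ih'
        by_cases hac : a * c < 0
        · simp only [hac, hiff.mp hac, if_true]; omega
        · simp only [hac, fun hh => hac (hiff.mpr hh), if_false]; omega

lemma sign_pair {a b a' b' : ℝ} (ha : 0 < a * a') (hb : 0 < b * b') :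
    (a' * b' < 0 ↔ a * b < 0) := by
  constructor
  · intro h
    have h1 : a' * b < 0 := sign_trans h hb
    have h2 : b * a' < 0 := by linarith [mul_comm a' b]
    have h3 : b * a < 0 := sign_trans h2 ha
    linarith [mul_comm b a]
  · intro h
    have h1 : b * a < 0 := by linarith [mul_comm a b]
    have h2 : b * a' < 0 := sign_trans h1 (by linarith [mul_comm a a'])
    have h3 : a' * b < 0 := by linarith [mul_comm b a']
    have h4 : a' * b' < 0 := sign_trans h3 (by linarith [mul_comm b b'])
    exact h4

lemma tail_map' {α β : Type*} (f : α → β) (l : List α) :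
    (l.map f).tail = l.tail.map f := by
  cases l <;> rfl

lemma sc_map_congr {α : Type*} (l : List α) (f g : α → ℝ)
    (h : ∀ i ∈ l, ∀ j ∈ l, (f i * f j < 0 ↔ g i * g j < 0)) :
    sc (l.map f) = sc (l.map g) := by
  unfold sc
  rw [tail_map', tail_map', List.zip_map, List.zip_map, List.countP_map,
    List.countP_map]
  apply List.countP_congr
  intro q hq
  obtain ⟨h1, h2⟩ := List.of_mem_zip hq
  have h2' : q.2 ∈ l := List.mem_of_mem_tail h2
  simp only [Function.comp_apply, Prod.map_apply, decide_eq_true_eq, Prod.map_fst,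
    Prod.map_snd]
  exact h q.1 h1 q.2 h2'

/-- If `x^k → x*` in `ℝⁿ`, then `liminf_k S(x^k) ≥ S(x*)`. -/
theorem liminf_variation_ge {n : ℕ} (x : ℕ → Fin n → ℝ) (xs : Fin n → ℝ)
    (hconv : Filter.Tendsto x Filter.atTop (nhds xs)) :
    variation (List.ofFn xs) ≤
      Filter.liminf (fun k => variation (List.ofFn (x k))) Filter.atTop := by
  have hcoord : ∀ i : Fin n, Filter.Tendsto (fun k => x k i) Filter.atTop (nhds (xs i)) :=
    tendsto_pi_nhds.mp hconv
  have hev : ∀ᶠ k in Filter.atTop, ∀ i : Fin n, xs i ≠ 0 → 0 < xs i * x k i := by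
    rw [Filter.eventually_all]
    intro i
    by_cases hi : xs i ≠ 0
    · have hpos : 0 < xs i * xs i := mul_self_pos.mpr hi
      have := (Filter.Tendsto.mul tendsto_const_nhds (hcoord i)).eventually
        (eventually_gt_nhds hpos)
      exact this.mono fun k hk _ => hk
    · filter_upwards with k h; exact absurd h hi
  have key : ∀ᶠ k in Filter.atTop,
      variation (List.ofFn xs) ≤ variation (List.ofFn (x k)) := by
    filter_upwards [hev] with k hk
    set idx := (List.finRange n).filter (fun i => xs i ≠ 0) with hidx
    have hmemidx : ∀ i ∈ idx, xs i ≠ 0 := by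
      intro i hi
      have := List.of_mem_filter hi
      simpa using this
    have hvxs : variation (List.ofFn xs) = sc (idx.map xs) := by
      unfold variation sc
      rw [List.ofFn_eq_map, List.filter_map]
      rfl
    have hunz : ∀ a ∈ idx.map (x k), a ≠ 0 := by
      intro a ha
      obtain ⟨i, hi, rfl⟩ := List.mem_map.mp ha
      intro h0
      have := hk i (hmemidx i hi)
      rw [h0, mul_zero] at this
      exact lt_irrefl _ this
    have hsub : (idx.map (x k)).Sublist (List.ofFn (x k)) := by
      rw [List.ofFn_eq_map]
      exact List.filter_sublist.map _
    have hsub2 : (idx.map (x k)).Sublist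
        ((List.ofFn (x k)).filter (fun a => a ≠ 0)) := by
      have heq : (idx.map (x k)).filter (fun a => a ≠ 0) = idx.map (x k) :=
        List.filter_eq_self.mpr (by intro a ha; simpa using hunz a ha)
      exact heq ▸ (hsub.filter _)
    have hwnz : ∀ a ∈ (List.ofFn (x k)).filter (fun a => a ≠ 0), a ≠ 0 := by
      intro a ha
      have := List.of_mem_filter ha
      simpa using this
    have hcongr : sc (idx.map (x k)) = sc (idx.map xs) := by
      apply sc_map_congr
      intro i hi j hj
      exact sign_pair (hk i (hmemidx i hi)) (hk j (hmemidx j hj))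
    calc variation (List.ofFn xs) = sc (idx.map xs) := hvxs
      _ = sc (idx.map (x k)) := hcongr.symm
      _ ≤ sc (idx.map (x k)) + hd2 (idx.map (x k))
            ((List.ofFn (x k)).filter (fun a => a ≠ 0)) := Nat.le_add_right _ _
      _ ≤ sc ((List.ofFn (x k)).filter (fun a => a ≠ 0)) := sc_sublist_aux hsub2 hwnz
      _ = variation (List.ofFn (x k)) := rfl
  have hbound : ∀ k, variation (List.ofFn (x k)) ≤ n := by
    intro k
    unfold variation
    calc _ ≤ (((List.ofFn (x k)).filter (fun a => a ≠ 0)).zip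
          ((List.ofFn (x k)).filter (fun a => a ≠ 0)).tail).length :=
        List.countP_le_length
      _ ≤ ((List.ofFn (x k)).filter (fun a => a ≠ 0)).length := by
          rw [List.length_zip]; exact min_le_left _ _
      _ ≤ (List.ofFn (x k)).length := List.length_filter_le _ _
      _ = n := List.length_ofFn
  exact Filter.le_liminf_of_le
    (Filter.isCoboundedUnder_ge_of_le _ hbound) key
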